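/- For any positive integers F, Z with Z < F such that (2F−2Z−1) does not divide (F−Z)F, every (F,F,Z,S) PDA satisfies S ≥ 2(F−Z). -/

import Mathlib

/-- A `(K, F, Z, S)` placement delivery array: an `F × K` array over `[0,S) ∪ {*}`
(star encoded as `none`) such that each column contains exactly `Z` stars, every
integer in `[0,S)` appears, and any two equal integer entries lie in distinct rows
and distinct columns with stars at the two crossing positions. -/
def IsPDA (K F Z S : ℕ) (P : Fin F → Fin K → Option ℕ) : Prop :=
  (∀ j, (Finset.univ.filter fun i => P i j = none).card = Z) ∧
  (∀ i j s, P i j = some s → s < S) ∧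
  (∀ s, s < S → ∃ i j, P i j = some s) ∧
  (∀ i₁ j₁ i₂ j₂ s, P i₁ j₁ = some s → P i₂ j₂ = some s → (i₁ ≠ i₂ ∨ j₁ ≠ j₂) →
    i₁ ≠ i₂ ∧ j₁ ≠ j₂ ∧ P i₁ j₂ = none ∧ P i₂ j₁ = none)

/-- `minS K F Z` is the minimum `S` for which a `(K, F, Z, S)` PDA exists. -/
noncomputable def minS (K F Z : ℕ) : ℕ :=
  sInf {S | ∃ P : Fin F → Fin K → Option ℕ, IsPDA K F Z S P}

namespace Stmt8
open Finset

variable {F Z S : ℕ} (P : Fin F → Fin F → Option ℕ)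

def allCells : Finset (Fin F × Fin F) := univ.filter fun c => (P c.1 c.2).isSome
def cells (t : ℕ) : Finset (Fin F × Fin F) := univ.filter fun c => P c.1 c.2 = some t
def rset (i : Fin F) : Finset (Fin F) := univ.filter fun j => (P i j).isSome
def cset (j : Fin F) : Finset (Fin F) := univ.filter fun i => (P i j).isSome
def Bset (c₂ : Fin F × Fin F) : Finset (Fin F × Fin F) :=
  univ.filter fun c₁ => (P c₁.1 c₁.2).isSome ∧ c₁ ≠ c₂ ∧ (c₁.1 = c₂.1 ∨ c₁.2 = c₂.2)
def Pairs (t : ℕ) : Finset ((Fin F × Fin F) × (Fin F × Fin F)) :=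
  (cells P t).biUnion fun c₂ => (Bset P c₂).image fun c₁ => (c₁, c₂)

variable {P}

lemma once_row (hP : IsPDA F F Z S P) {i j₁ j₂ : Fin F} {s : ℕ}
    (h1 : P i j₁ = some s) (h2 : P i j₂ = some s) : j₁ = j₂ := by
  by_contra h
  exact (hP.2.2.2 i j₁ i j₂ s h1 h2 (Or.inr h)).1 rfl

lemma once_col (hP : IsPDA F F Z S P) {i₁ i₂ j : Fin F} {s : ℕ}
    (h1 : P i₁ j = some s) (h2 : P i₂ j = some s) : i₁ = i₂ := by
  by_contra h
  exact (hP.2.2.2 i₁ j i₂ j s h1 h2 (Or.inl h)).2.1 rfl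

lemma cset_card (hP : IsPDA F F Z S P) (j : Fin F) : (cset P j).card = F - Z := by
  have h1 : cset P j = univ \ (univ.filter fun i => P i j = none) := by
    rw [← filter_not]
    apply filter_congr
    intro i _
    simp [Option.isSome_iff_ne_none]
  rw [h1, card_sdiff_of_subset (filter_subset _ _), hP.1 j, card_univ, Fintype.card_fin]

lemma Bset_eq (c₂ : Fin F × Fin F) :
    Bset P c₂ = ((rset P c₂.1).erase c₂.2).image (fun j => (c₂.1, j)) ∪
      ((cset P c₂.2).erase c₂.1).image (fun i => (i, c₂.2)) := by
  ext ⟨a, b⟩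
  simp only [Bset, rset, cset, mem_filter, mem_univ, true_and, mem_union, mem_image,
    mem_erase, Prod.ext_iff, ne_eq, not_and]
  aesop

lemma Bset_card (hP : IsPDA F F Z S P) {c₂ : Fin F × Fin F} (hc : (P c₂.1 c₂.2).isSome) :
    (Bset P c₂).card = ((rset P c₂.1).card - 1) + ((F - Z) - 1) := by
  rw [Bset_eq]
  rw [card_union_of_disjoint]
  · rw [card_image_of_injective _ (fun x y h => by simpa [Prod.ext_iff] using h),
      card_image_of_injective _ (fun x y h => by simpa [Prod.ext_iff] using h),
      card_erase_of_mem, card_erase_of_mem, cset_card hP]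
    · simp [cset, hc]
    · simp [rset, hc]
  · rw [disjoint_left]
    rintro ⟨a, b⟩ h1 h2
    simp only [mem_image, mem_erase, Prod.ext_iff] at h1 h2
    obtain ⟨j, ⟨hj, -⟩, -, rfl⟩ := h1
    obtain ⟨i, ⟨hi, -⟩, -, h⟩ := h2
    exact hj h.symm

lemma Pairs_card (t : ℕ) :
    (Pairs P t).card = ∑ c₂ ∈ cells P t, (Bset P c₂).card := by
  rw [Pairs, card_biUnion]
  · exact sum_congr rfl fun c₂ _ =>
      card_image_of_injective _ (fun x y h => (Prod.ext_iff.1 h).1)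
  · intro x hx y hy hxy
    rw [Function.onFun, disjoint_left]
    rintro a h1 h2
    simp only [mem_image] at h1 h2
    obtain ⟨c, -, rfl⟩ := h1
    obtain ⟨c', -, h⟩ := h2
    exact hxy ((Prod.ext_iff.1 h).2.symm)

lemma cells_subset (t : ℕ) : cells P t ⊆ allCells P := by
  intro c hc
  simp only [cells, mem_filter, mem_univ, true_and] at hc
  simp [allCells, hc]

lemma Pairs_card_le (hP : IsPDA F F Z S P) (t : ℕ) :
    (Pairs P t).card ≤ (allCells P).card - (cells P t).card := by
  rw [← card_sdiff_of_subset (cells_subset t)]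
  apply card_le_card_of_injOn Prod.fst
  · intro x hx
    simp only [mem_coe, Pairs, mem_biUnion, mem_image] at hx
    obtain ⟨c₂, hc₂, c₁, hc₁, rfl⟩ := hx
    simp only [Bset, mem_filter, mem_univ, true_and] at hc₁
    obtain ⟨hs, hne, hrc⟩ := hc₁
    simp only [cells, mem_filter, mem_univ, true_and] at hc₂
    simp only [mem_coe, mem_sdiff, cells, mem_filter, mem_univ, true_and]
    refine ⟨by simp [allCells, hs], fun hc₁t => ?_⟩
    rcases hrc with h | h
    · exact hne (Prod.ext h (once_row hP hc₁t (by rw [h]; exact hc₂)))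
    · exact hne (Prod.ext (once_col hP hc₁t (by rw [h]; exact hc₂)) h)
  · rintro x hx y hy hxy
    simp only [mem_coe, Pairs, mem_biUnion, mem_image] at hx hy
    obtain ⟨c₂, hc₂, c₁, hc₁, rfl⟩ := hx
    obtain ⟨d₂, hd₂, d₁, hd₁, rfl⟩ := hy
    simp only at hxy
    subst hxy
    simp only [Prod.mk.injEq, true_and]
    simp only [Bset, mem_filter, mem_univ, true_and] at hc₁ hd₁
    obtain ⟨hs, hnec, hrcc⟩ := hc₁
    obtain ⟨-, hned, hrcd⟩ := hd₁
    simp only [cells, mem_filter, mem_univ, true_and] at hc₂ hd₂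
    by_contra hcd
    have hne2 : c₂.1 ≠ d₂.1 ∨ c₂.2 ≠ d₂.2 := by
      by_contra hh
      push_neg at hh
      exact hcd (Prod.ext hh.1 hh.2)
    rcases hrcc with h1 | h1 <;> rcases hrcd with h2 | h2
    · have e1 : P c₁.1 c₂.2 = some t := by rw [h1]; exact hc₂
      have e2 : P c₁.1 d₂.2 = some t := by rw [h2]; exact hd₂
      exact hcd (Prod.ext (h1.symm.trans h2) (once_row hP e1 e2))
    · have := (hP.2.2.2 c₂.1 c₂.2 d₂.1 d₂.2 t hc₂ hd₂ hne2).2.2.1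
      rw [← h1, ← h2] at this
      simp [this] at hs
    · have := (hP.2.2.2 c₂.1 c₂.2 d₂.1 d₂.2 t hc₂ hd₂ hne2).2.2.2
      rw [← h1, ← h2] at this
      simp [this] at hs
    · have e1 : P c₂.1 c₁.2 = some t := by rw [h1]; exact hc₂
      have e2 : P d₂.1 c₁.2 = some t := by rw [h2]; exact hd₂
      exact hcd (Prod.ext (once_col hP e1 e2) (h1.symm.trans h2))

lemma row_fiber (i : Fin F) :
    (allCells P).filter (fun c => c.1 = i) = (rset P i).image (fun j => (i, j)) := by
  ext ⟨a, b⟩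
  simp only [allCells, rset, mem_filter, mem_univ, true_and, mem_image, Prod.mk.injEq]
  aesop

lemma col_fiber (j : Fin F) :
    (allCells P).filter (fun c => c.2 = j) = (cset P j).image (fun i => (i, j)) := by
  ext ⟨a, b⟩
  simp only [allCells, cset, mem_filter, mem_univ, true_and, mem_image, Prod.mk.injEq]
  aesop

lemma allCells_card_rows : (allCells P).card = ∑ i, (rset P i).card := by
  rw [card_eq_sum_card_fiberwise (f := Prod.fst) (t := univ) (fun x _ => mem_univ _)]
  exact sum_congr rfl fun i _ => by
    rw [row_fiber, card_image_of_injective _ (fun x y h => (Prod.ext_iff.1 h).2)]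

lemma allCells_card_cols (hP : IsPDA F F Z S P) : (allCells P).card = F * (F - Z) := by
  rw [card_eq_sum_card_fiberwise (f := Prod.snd) (t := univ) (fun x _ => mem_univ _)]
  have h1 : ∀ j : Fin F, ((allCells P).filter fun c => c.2 = j).card = F - Z := fun j => by
    rw [col_fiber, card_image_of_injective _ (fun x y h => (Prod.ext_iff.1 h).1), cset_card hP]
  rw [sum_congr rfl fun j _ => h1 j, sum_const, card_univ, Fintype.card_fin, smul_eq_mul]

lemma allCells_eq_biUnion (hP : IsPDA F F Z S P) :
    allCells P = (Finset.range S).biUnion (fun t => cells P t) := by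
  ext c
  simp only [allCells, cells, mem_filter, mem_univ, true_and, mem_biUnion, mem_range]
  constructor
  · intro h
    obtain ⟨s, hs⟩ := Option.isSome_iff_exists.1 h
    exact ⟨s, hP.2.1 _ _ _ hs, hs⟩
  · rintro ⟨s, -, hs⟩
    simp [hs]

lemma sum_cells (hP : IsPDA F F Z S P) (f : Fin F × Fin F → ℕ) :
    ∑ t ∈ Finset.range S, ∑ c ∈ cells P t, f c = ∑ c ∈ allCells P, f c := by
  rw [allCells_eq_biUnion hP, sum_biUnion]
  intro x hx y hy hxy
  simp only [Function.onFun]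
  rw [disjoint_left]
  intro c hcx hcy
  simp only [cells, mem_filter] at hcx hcy
  exact hxy (Option.some.inj (hcx.2.symm.trans hcy.2))

lemma sum_allCells_row (g : Fin F → ℕ) :
    ∑ c ∈ allCells P, g c.1 = ∑ i, (rset P i).card * g i := by
  rw [← sum_fiberwise_of_maps_to (g := Prod.fst) (t := (univ : Finset (Fin F)))
    (fun x _ => mem_univ _) (fun c => g c.1)]
  refine sum_congr rfl fun i _ => ?_
  have h1 : ∀ c ∈ (allCells P).filter (fun c => c.1 = i), g c.1 = g i := by
    intro c hc
    rw [(mem_filter.1 hc).2]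
  rw [sum_congr rfl h1, sum_const, row_fiber (P := P) i,
    card_image_of_injective _ (fun x y h => (Prod.ext_iff.1 h).2), smul_eq_mul]

end Stmt8

open Finset Stmt8

/-- if Z < F and (2F−2Z−1) ∤ (F−Z)F, then every (F,F,Z,S) PDA
satisfies S ≥ 2(F−Z). -/
theorem stmt8 (F Z S : ℕ) (hZ : 0 < Z) (hZF : Z < F)
    (hdvd : ¬ (2 * F - 2 * Z - 1) ∣ (F - Z) * F)
    (P : Fin F → Fin F → Option ℕ) (hP : IsPDA F F Z S P) :
    2 * (F - Z) ≤ S := by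
  classical
  by_contra hS
  push_neg at hS
  set q := F - Z with hqdef
  have hq1 : 1 ≤ q := by omega
  have hF : 0 < F := by omega
  obtain ⟨p, hp⟩ : ∃ p, q = p + 1 := ⟨q - 1, by omega⟩
  set r : Fin F → ℕ := fun i => (rset P i).card with hrdef
  set T := (allCells P).card with hTdef
  have hTcol : T = F * q := allCells_card_cols hP
  have hTrow : T = ∑ i, r i := allCells_card_rows
  have hgsum : ∑ t ∈ Finset.range S, (cells P t).card = T := by
    have h := sum_cells hP (fun _ => 1)
    simpa using h
  have hcells_some : ∀ t : ℕ, ∀ c ∈ cells P t, (P c.1 c.2).isSome := by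
    intro t c hc
    have := cells_subset (P := P) t hc
    simpa [allCells] using this
  -- master inequality
  have hA : ∀ t ∈ Finset.range S,
      (∑ c ∈ cells P t, ((r c.1 - 1) + (q - 1))) + (cells P t).card ≤ T := by
    intro t ht
    have h1 : (Pairs P t).card = ∑ c ∈ cells P t, ((r c.1 - 1) + (q - 1)) := by
      rw [Pairs_card]
      exact Finset.sum_congr rfl fun c hc => Bset_card hP (hcells_some t c hc)
    have h2 := Pairs_card_le hP t
    have h3 : (cells P t).card ≤ T := Finset.card_le_card (cells_subset t)
    rw [← hTdef] at h2
    omega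
  have hM : (∑ c ∈ allCells P, ((r c.1 - 1) + (q - 1))) + T ≤ S * T := by
    have h := Finset.sum_le_sum hA
    rw [Finset.sum_add_distrib, sum_cells hP, hgsum, Finset.sum_const,
      Finset.card_range, smul_eq_mul] at h
    exact h
  have hrowform : (∑ c ∈ allCells P, ((r c.1 - 1) + (q - 1)))
      = ∑ i, r i * ((r i - 1) + (q - 1)) := by
    have := sum_allCells_row (P := P) (fun i => ((rset P i).card - 1) + (q - 1))
    simpa [hrdef] using this
  rw [hrowform] at hM
  -- identity per i
  have hid : ∀ i, r i * ((r i - 1) + (q - 1)) + 2 * r i = r i * r i + q * r i := by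
    intro i
    rcases Nat.eq_zero_or_pos (r i) with h | h
    · simp [h]
    · obtain ⟨m, hm⟩ : ∃ m, r i = m + 1 := ⟨r i - 1, by omega⟩
      rw [hm, hp]
      simp only [Nat.add_sub_cancel]
      ring
  have hsum2 : ∑ i, (r i * r i + q * r i)
      = (∑ i, r i * ((r i - 1) + (q - 1))) + 2 * T := by
    rw [hTrow, Finset.mul_sum, ← Finset.sum_add_distrib]
    exact Finset.sum_congr rfl fun i _ => (hid i).symm
  have hX : ∑ i, r i * r i ≤ q * T := by
    have h3 : S * T ≤ 2 * (q * T) - T := by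
      calc S * T ≤ (2 * q - 1) * T := Nat.mul_le_mul_right _ (by omega)
        _ = 2 * (q * T) - T := by rw [Nat.sub_mul, one_mul, mul_assoc]
    have h4 : ∑ i, (r i * r i + q * r i) = (∑ i, r i * r i) + q * T := by
      rw [Finset.sum_add_distrib, hTrow, Finset.mul_sum]
    set a := ∑ i, r i * r i with ha
    set b := q * T with hb
    set st := S * T with hst
    set A := ∑ i, r i * ((r i - 1) + (q - 1)) with hA2
    omega
  -- all rows have exactly q integer cells
  have hreq : ∀ i, r i = q := by
    have e1 : (∑ i, ((r i : ℤ))) = (T : ℤ) := by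
      rw [hTrow]
      push_cast
      rfl
    have e2 : (∑ i, ((r i : ℤ) * (r i : ℤ))) ≤ (q : ℤ) * (T : ℤ) := by
      have : ((∑ i, r i * r i : ℕ) : ℤ) ≤ ((q * T : ℕ) : ℤ) := by exact_mod_cast hX
      push_cast at this
      exact this
    have hTc : (T : ℤ) = (F : ℤ) * (q : ℤ) := by exact_mod_cast hTcol
    have e3 : ∑ i, ((r i : ℤ) - q) ^ 2
        = (∑ i, ((r i : ℤ) * (r i : ℤ))) - 2 * q * (∑ i, ((r i : ℤ))) + F * q ^ 2 := by
      have hexp : ∀ i ∈ (univ : Finset (Fin F)), ((r i : ℤ) - q) ^ 2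
          = (r i : ℤ) * (r i : ℤ) - 2 * q * (r i : ℤ) + q ^ 2 := fun i _ => by ring
      rw [Finset.sum_congr rfl hexp, Finset.sum_add_distrib, Finset.sum_sub_distrib,
        ← Finset.mul_sum, Finset.sum_const, card_univ, Fintype.card_fin, nsmul_eq_mul]
    have hsq : ∑ i, ((r i : ℤ) - q) ^ 2 ≤ 0 := by
      rw [e3, e1]
      have hqt : (q : ℤ) * (T : ℤ) = F * q ^ 2 := by rw [hTc]; ring
      linarith [e2]
    have hnn : ∀ i ∈ (univ : Finset (Fin F)), 0 ≤ ((r i : ℤ) - q) ^ 2 :=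
      fun i _ => sq_nonneg _
    have h0 := (Finset.sum_eq_zero_iff_of_nonneg hnn).1
      (le_antisymm hsq (Finset.sum_nonneg hnn))
    intro i
    have := h0 i (mem_univ i)
    have h5 : (r i : ℤ) = (q : ℤ) := by
      have := pow_eq_zero_iff (n := 2) (by norm_num) |>.1 this
      linarith [this]
    exact_mod_cast h5
  -- second stage: each symbol multiplicity
  have hE : ∀ t ∈ Finset.range S, (cells P t).card * (2 * q - 1) ≤ T := by
    intro t ht
    have h1 : (Pairs P t).card = (cells P t).card * ((q - 1) + (q - 1)) := by
      rw [Pairs_card]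
      have hc : ∀ c ∈ cells P t, (Bset P c).card = (q - 1) + (q - 1) := by
        intro c hc
        rw [Bset_card hP (hcells_some t c hc)]
        rw [show (rset P c.1).card = q from hreq c.1]
      rw [Finset.sum_congr rfl hc, Finset.sum_const, smul_eq_mul]
    have h2 := Pairs_card_le hP t
    rw [← hTdef] at h2
    have h3 : (cells P t).card ≤ T := Finset.card_le_card (cells_subset t)
    have h4 : (cells P t).card * (2 * q - 1)
        = (cells P t).card * ((q - 1) + (q - 1)) + (cells P t).card := by
      have h5 : (q - 1) + (q - 1) + 1 = 2 * q - 1 := by omega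
      rw [← h5, ← Nat.mul_succ]
    set a := (cells P t).card * ((q - 1) + (q - 1)) with ha
    set b := (cells P t).card with hb
    set c := (cells P t).card * (2 * q - 1) with hcc
    omega
  have hsumE : ∑ t ∈ Finset.range S, (cells P t).card * (2 * q - 1) = T * (2 * q - 1) := by
    rw [← Finset.sum_mul, hgsum]
  have hle1 : T * (2 * q - 1) ≤ S * T := by
    rw [← hsumE]
    calc ∑ t ∈ Finset.range S, (cells P t).card * (2 * q - 1)
        ≤ ∑ _t ∈ Finset.range S, T := Finset.sum_le_sum hE
      _ = S * T := by rw [Finset.sum_const, Finset.card_range, smul_eq_mul]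
  have hge : S * T ≤ T * (2 * q - 1) := by
    rw [mul_comm T]
    exact Nat.mul_le_mul_right _ (by omega)
  have hT0 : 0 < T := by
    rw [hTcol]
    exact Nat.mul_pos hF (by omega)
  have heq : ∑ t ∈ Finset.range S, (cells P t).card * (2 * q - 1)
      = ∑ _t ∈ Finset.range S, T := by
    rw [hsumE, Finset.sum_const, Finset.card_range, smul_eq_mul]
    omega
  have hpt := (Finset.sum_eq_sum_iff_of_le hE).1 heq
  have hS0 : 0 < S := by
    by_contra h
    push_neg at h
    interval_cases S
    simp at hle1
    have : T ≤ T * (2 * q - 1) := Nat.le_mul_of_pos_right T (by omega)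
    omega
  have hfin := hpt 0 (Finset.mem_range.2 hS0)
  apply hdvd
  have hq2 : 2 * F - 2 * Z - 1 = 2 * q - 1 := by omega
  rw [hq2]
  refine ⟨(cells P 0).card, ?_⟩
  calc q * F = F * q := mul_comm _ _
    _ = T := hTcol.symm
    _ = (cells P 0).card * (2 * q - 1) := hfin.symm
    _ = (2 * q - 1) * (cells P 0).card := mul_comm _ _
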